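/- Let ρ and σ be density matrices with supp(ρ) ⊆ supp(σ). Then for any c > 0, D(ρ‖σ) ≥ (1/c)·Tr(ρ − ρ^{1−c} σ^c). -/

import Mathlib

open Matrix
open scoped ComplexOrder

variable {d : Type*} [Fintype d] [DecidableEq d]

open Classical in
/-- Functional calculus for Hermitian matrices: apply `f` to the eigenvalues.
Returns `0` if the matrix is not Hermitian. -/
noncomputable def mfun (f : ℝ → ℝ) (A : Matrix d d ℂ) : Matrix d d ℂ :=
  if hA : A.IsHermitian then
    (hA.eigenvectorUnitary : Matrix d d ℂ) *
      Matrix.diagonal (fun i => (f (hA.eigenvalues i) : ℂ)) *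
      star (hA.eigenvectorUnitary : Matrix d d ℂ)
  else 0

/-- Matrix logarithm on the support (eigenvalues `≤ 0` are mapped to `0`). -/
noncomputable def logm (A : Matrix d d ℂ) : Matrix d d ℂ :=
  mfun (fun x => if x ≤ 0 then 0 else Real.log x) A

/-- Matrix real power on the support (eigenvalues `≤ 0` are mapped to `0`). -/
noncomputable def powm (A : Matrix d d ℂ) (p : ℝ) : Matrix d d ℂ :=
  mfun (fun x => if x ≤ 0 then 0 else x ^ p) A

/-- Quantum relative entropy `D(ρ‖σ) = Tr(ρ (log ρ − log σ))` (natural log). -/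
noncomputable def qRelEnt (ρ σ : Matrix d d ℂ) : ℝ :=
  ((ρ * (logm ρ - logm σ)).trace).re

/-- The support of `ρ` is contained in the support of `σ` (kernel containment,
equivalent to range containment for Hermitian matrices). -/
def SuppSubset (ρ σ : Matrix d d ℂ) : Prop :=
  ∀ v : d → ℂ, σ.mulVec v = 0 → ρ.mulVec v = 0

/-- Trace norm of a Hermitian matrix: `Tr |A|`. -/
noncomputable def traceNorm (A : Matrix d d ℂ) : ℝ :=
  ((mfun (fun x => |x|) A).trace).re

lemma mfun_of_hermitian (f : ℝ → ℝ) {A : Matrix d d ℂ} (hA : A.IsHermitian) :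
    mfun f A = (hA.eigenvectorUnitary : Matrix d d ℂ) *
      Matrix.diagonal (fun i => (f (hA.eigenvalues i) : ℂ)) *
      star (hA.eigenvectorUnitary : Matrix d d ℂ) := by
  rw [mfun, dif_pos hA]

lemma star_mul_self_eigU {A : Matrix d d ℂ} (hA : A.IsHermitian) :
    star (hA.eigenvectorUnitary : Matrix d d ℂ) * (hA.eigenvectorUnitary : Matrix d d ℂ) = 1 :=
  Matrix.mem_unitaryGroup_iff'.mp hA.eigenvectorUnitary.2

lemma mul_star_self_eigU {A : Matrix d d ℂ} (hA : A.IsHermitian) :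
    (hA.eigenvectorUnitary : Matrix d d ℂ) * star (hA.eigenvectorUnitary : Matrix d d ℂ) = 1 :=
  Matrix.mem_unitaryGroup_iff.mp hA.eigenvectorUnitary.2

lemma mfun_id {A : Matrix d d ℂ} (hA : A.IsHermitian) : mfun (fun x => x) A = A := by
  rw [mfun_of_hermitian _ hA]
  exact hA.spectral_theorem.symm

lemma trace_conj_unitary {U M : Matrix d d ℂ} (h : star U * U = 1) :
    (U * M * star U).trace = M.trace := by
  rw [Matrix.trace_mul_cycle, h, one_mul]

lemma mfun_mul_mfun (f g : ℝ → ℝ) {A : Matrix d d ℂ} (hA : A.IsHermitian) :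
    mfun f A * mfun g A = mfun (fun x => f x * g x) A := by
  rw [mfun_of_hermitian f hA, mfun_of_hermitian g hA, mfun_of_hermitian _ hA]
  set U := (hA.eigenvectorUnitary : Matrix d d ℂ)
  calc U * Matrix.diagonal (fun i => (f (hA.eigenvalues i) : ℂ)) * star U *
      (U * Matrix.diagonal (fun i => (g (hA.eigenvalues i) : ℂ)) * star U)
      = U * (Matrix.diagonal (fun i => (f (hA.eigenvalues i) : ℂ)) * (star U * U) *
        Matrix.diagonal (fun i => (g (hA.eigenvalues i) : ℂ))) * star U := by
        simp only [mul_assoc]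
    _ = _ := by
        rw [star_mul_self_eigU hA, mul_one, Matrix.diagonal_mul_diagonal]
        simp [← Complex.ofReal_mul]

lemma trace_mfun (f : ℝ → ℝ) {A : Matrix d d ℂ} (hA : A.IsHermitian) :
    ((mfun f A).trace).re = ∑ i, f (hA.eigenvalues i) := by
  rw [mfun_of_hermitian f hA, trace_conj_unitary (star_mul_self_eigU hA), Matrix.trace_diagonal]
  simp

lemma trace_mfun_mul_mfun (f g : ℝ → ℝ) {A B : Matrix d d ℂ}
    (hA : A.IsHermitian) (hB : B.IsHermitian) :
    ((mfun f A * mfun g B).trace).re =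
    ∑ i, ∑ j, f (hA.eigenvalues i) * g (hB.eigenvalues j) *
      ‖(star (hA.eigenvectorUnitary : Matrix d d ℂ) *
        (hB.eigenvectorUnitary : Matrix d d ℂ)) i j‖ ^ 2 := by
  rw [mfun_of_hermitian f hA, mfun_of_hermitian g hB]
  set U := (hA.eigenvectorUnitary : Matrix d d ℂ)
  set V := (hB.eigenvectorUnitary : Matrix d d ℂ)
  set W := star U * V with hW
  set D1 := Matrix.diagonal (fun i => (f (hA.eigenvalues i) : ℂ))
  set D2 := Matrix.diagonal (fun i => (g (hB.eigenvalues i) : ℂ))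
  have key : U * D1 * star U * (V * D2 * star V) = U * (D1 * W * D2 * star W) * star U := by
    have hsW : star W = star V * U := by rw [hW, Matrix.star_mul, star_star]
    rw [hsW, hW]
    simp only [mul_assoc]
    rw [mul_star_self_eigU hA, mul_one]
  rw [key, trace_conj_unitary (star_mul_self_eigU hA)]
  rw [Matrix.trace]
  rw [Complex.re_sum]
  apply Finset.sum_congr rfl
  intro i _
  have h1 : (D1 * W * D2 * star W) i i = ∑ j, (f (hA.eigenvalues i) : ℂ) * W i j *
      (g (hB.eigenvalues j) : ℂ) * (starRingEnd ℂ) (W i j) := by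
    have e1 : D1 * W * D2 * star W = D1 * ((W * D2) * star W) := by simp only [mul_assoc]
    rw [e1, Matrix.diagonal_mul, Matrix.mul_apply, Finset.mul_sum]
    apply Finset.sum_congr rfl
    intro j _
    rw [Matrix.mul_diagonal, Matrix.star_apply, RCLike.star_def]
    ring
  rw [Matrix.diag_apply, h1, Complex.re_sum]
  apply Finset.sum_congr rfl
  intro j _
  have : (f (hA.eigenvalues i) : ℂ) * W i j * (g (hB.eigenvalues j) : ℂ) *
      (starRingEnd ℂ) (W i j) = ((f (hA.eigenvalues i) * g (hB.eigenvalues j) *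
      ‖W i j‖ ^ 2 : ℝ) : ℂ) := by
    rw [mul_comm ((f (hA.eigenvalues i) : ℂ) * W i j) ((g (hB.eigenvalues j)) : ℂ)]
    rw [mul_assoc, mul_assoc, Complex.mul_conj, Complex.normSq_eq_norm_sq]
    push_cast
    ring
  rw [this, Complex.ofReal_re]

lemma rowsum_one {A B : Matrix d d ℂ} (hA : A.IsHermitian) (hB : B.IsHermitian) (i : d) :
    ∑ j, ‖(star (hA.eigenvectorUnitary : Matrix d d ℂ) *
      (hB.eigenvectorUnitary : Matrix d d ℂ)) i j‖ ^ 2 = 1 := by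
  set U := (hA.eigenvectorUnitary : Matrix d d ℂ)
  set V := (hB.eigenvectorUnitary : Matrix d d ℂ)
  set W := star U * V with hW
  have hWW : W * star W = 1 := by
    rw [hW, Matrix.star_mul, star_star]
    calc star U * V * (star V * U) = star U * (V * star V) * U := by simp only [mul_assoc]
      _ = 1 := by rw [mul_star_self_eigU hB, mul_one, star_mul_self_eigU hA]
  have h1 : ((W * star W) i i).re = 1 := by rw [hWW]; simp
  rw [Matrix.mul_apply] at h1
  rw [← h1, Complex.re_sum]
  apply Finset.sum_congr rfl
  intro j _
  rw [Matrix.star_apply, RCLike.star_def, Complex.mul_conj, Complex.ofReal_re,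
    Complex.normSq_eq_norm_sq]

lemma support_eig {ρ σ : Matrix d d ℂ} (hρ : ρ.PosSemidef) (hσ : σ.PosSemidef)
    (hsupp : SuppSubset ρ σ) (j : d) (hq : hσ.1.eigenvalues j = 0) (i : d) :
    hρ.1.eigenvalues i * ‖(star (hρ.1.eigenvectorUnitary : Matrix d d ℂ) *
      (hσ.1.eigenvectorUnitary : Matrix d d ℂ)) i j‖ ^ 2 = 0 := by
  set U := (hρ.1.eigenvectorUnitary : Matrix d d ℂ) with hU
  set V := (hσ.1.eigenvectorUnitary : Matrix d d ℂ) with hV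
  have hv0 : σ.mulVec (fun k => V k j) = 0 := by
    have := hσ.1.mulVec_eigenvectorBasis j
    rw [hq, zero_smul] at this
    have hcol : (fun k => V k j) = ⇑(hσ.1.eigenvectorBasis j) := by
      funext k
      exact Matrix.IsHermitian.eigenvectorUnitary_apply hσ.1 k j
    rw [hcol, this]
  have hr0 : ρ.mulVec (fun k => V k j) = 0 := hsupp _ hv0
  have hcol0 : ∀ k, (ρ * V) k j = 0 := by
    intro k
    have : (ρ * V) k j = ρ.mulVec (fun m => V m j) k := by
      simp [Matrix.mul_apply, Matrix.mulVec, dotProduct]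
    rw [this, hr0]
    rfl
  have hkey : (↑(hρ.1.eigenvalues i) : ℂ) * (star U * V) i j = 0 := by
    have e1 : star U * (ρ * V) =
        Matrix.diagonal (fun k => (hρ.1.eigenvalues k : ℂ)) * (star U * V) := by
      conv_lhs => rw [hρ.1.spectral_theorem]
      calc star U * (U * Matrix.diagonal (RCLike.ofReal ∘ hρ.1.eigenvalues) * star U * V)
          = (star U * U) * (Matrix.diagonal (RCLike.ofReal ∘ hρ.1.eigenvalues) * (star U * V)) := by
            simp only [mul_assoc]
        _ = _ := by rw [star_mul_self_eigU hρ.1, one_mul]; rfl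
    have e2 : (star U * (ρ * V)) i j = 0 := by
      rw [Matrix.mul_apply]
      apply Finset.sum_eq_zero
      intro k _
      rw [hcol0 k, mul_zero]
    rw [e1] at e2
    rw [Matrix.diagonal_mul] at e2
    exact e2
  rcases mul_eq_zero.mp hkey with h | h
  · rw [Complex.ofReal_eq_zero.mp h, zero_mul]
  · rw [h, norm_zero]
    ring

lemma scalar_ineq {p q c : ℝ} (hp : 0 < p) (hq : 0 < q) (hc : 0 < c) :
    (1 / c) * (p - p ^ (1 - c) * q ^ c) ≤ p * (Real.log p - Real.log q) := by
  set t := q / p with ht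
  have htpos : 0 < t := div_pos hq hp
  have hpw : p ^ (1 - c) * q ^ c = p * t ^ c := by
    rw [ht, Real.div_rpow hq.le hp.le, Real.rpow_sub hp, Real.rpow_one]
    field_simp
  have hlog : Real.log p - Real.log q = -Real.log t := by
    rw [ht, Real.log_div hq.ne' hp.ne']
    ring
  have key : c * Real.log t ≤ t ^ c - 1 := by
    have h1 : Real.log (t ^ c) ≤ t ^ c - 1 :=
      Real.log_le_sub_one_of_pos (Real.rpow_pos_of_pos htpos c)
    rwa [Real.log_rpow htpos] at h1
  rw [hpw, hlog]
  rw [div_mul_eq_mul_div, div_le_iff₀ hc]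
  nlinarith [hp.le, key]

lemma pointwise_ineq {p q m c : ℝ} (hp : 0 ≤ p) (hq : 0 ≤ q) (hm : 0 ≤ m) (hc : 0 < c)
    (hsupp : q = 0 → p * m = 0) :
    (1 / c) * (p * m - (if p ≤ 0 then 0 else p ^ (1 - c)) * (if q ≤ 0 then 0 else q ^ c) * m)
      ≤ p * (if p ≤ 0 then 0 else Real.log p) * m - p * (if q ≤ 0 then 0 else Real.log q) * m := by
  rcases hp.eq_or_lt with hp0 | hp0
  · simp [← hp0]
  · rcases hq.eq_or_lt with hq0 | hq0
    · have hpm : p * m = 0 := hsupp hq0.symm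
      have hm0 : m = 0 := by
        rcases mul_eq_zero.mp hpm with h | h
        · exact absurd h hp0.ne'
        · exact h
      simp [hm0]
    · rw [if_neg (not_le.mpr hp0), if_neg (not_le.mpr hq0), if_neg (not_le.mpr hp0),
        if_neg (not_le.mpr hq0)]
      have key := scalar_ineq hp0 hq0 hc
      have := mul_le_mul_of_nonneg_right key hm
      nlinarith [this]

/-- For density matrices `ρ`, `σ` with `supp(ρ) ⊆ supp(σ)` and any `c > 0`,
`D(ρ‖σ) ≥ (1/c)·Tr(ρ − ρ^{1−c} σ^c)`. -/
theorem qRelEnt_ge_ruskai_lower (ρ σ : Matrix d d ℂ)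
    (hρ : ρ.PosSemidef) (hρ1 : ρ.trace = 1)
    (hσ : σ.PosSemidef) (hσ1 : σ.trace = 1)
    (hsupp : SuppSubset ρ σ) (c : ℝ) (hc : 0 < c) :
    (1 / c) * (((ρ - powm ρ (1 - c) * powm σ c).trace).re) ≤ qRelEnt ρ σ := by
  set p := hρ.1.eigenvalues with hp
  set q := hσ.1.eigenvalues with hq
  set M := fun i j => ‖(star (hρ.1.eigenvectorUnitary : Matrix d d ℂ) *
    (hσ.1.eigenvectorUnitary : Matrix d d ℂ)) i j‖ ^ 2 with hM
  set ℓ := fun x : ℝ => if x ≤ 0 then 0 else Real.log x with hℓ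
  -- rewrite LHS
  have hT2 : ((powm ρ (1 - c) * powm σ c).trace).re =
      ∑ i, ∑ j, (if p i ≤ 0 then 0 else p i ^ (1 - c)) *
        (if q j ≤ 0 then 0 else q j ^ c) * M i j := by
    rw [powm, powm, trace_mfun_mul_mfun _ _ hρ.1 hσ.1]
  have hsum1 : ∑ i, p i = 1 := by
    have := trace_mfun (fun x => x) hρ.1
    rw [mfun_id hρ.1, hρ1] at this
    simpa using this.symm
  have hT4 : ((ρ * logm ρ).trace).re = ∑ i, p i * ℓ (p i) := by
    rw [logm]
    nth_rewrite 1 [← mfun_id hρ.1]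
    rw [mfun_mul_mfun _ _ hρ.1, trace_mfun _ hρ.1]
  have hT3 : ((ρ * logm σ).trace).re = ∑ i, ∑ j, p i * ℓ (q j) * M i j := by
    conv_lhs => rw [← mfun_id hρ.1]
    rw [logm, trace_mfun_mul_mfun _ _ hρ.1 hσ.1]
  have hqre : qRelEnt ρ σ = (∑ i, p i * ℓ (p i)) - ∑ i, ∑ j, p i * ℓ (q j) * M i j := by
    rw [qRelEnt, mul_sub, Matrix.trace_sub, Complex.sub_re, hT4, hT3]
  have hlhs : ((ρ - powm ρ (1 - c) * powm σ c).trace).re =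
      (∑ i, p i) - ∑ i, ∑ j, (if p i ≤ 0 then 0 else p i ^ (1 - c)) *
        (if q j ≤ 0 then 0 else q j ^ c) * M i j := by
    rw [Matrix.trace_sub, Complex.sub_re, hT2, hρ1, Complex.one_re, hsum1]
  rw [hqre, hlhs]
  -- expand single sums into double sums using row sums of M
  have hrow : ∀ i, ∑ j, M i j = 1 := fun i => rowsum_one hρ.1 hσ.1 i
  have e1 : ∑ i, p i = ∑ i, ∑ j, p i * M i j := by
    apply Finset.sum_congr rfl
    intro i _
    rw [← Finset.mul_sum, hrow i, mul_one]
  have e2 : ∑ i, p i * ℓ (p i) = ∑ i, ∑ j, p i * ℓ (p i) * M i j := by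
    apply Finset.sum_congr rfl
    intro i _
    rw [← Finset.mul_sum, hrow i, mul_one]
  rw [e1, e2]
  rw [← Finset.sum_sub_distrib, ← Finset.sum_sub_distrib, Finset.mul_sum]
  apply Finset.sum_le_sum
  intro i _
  rw [← Finset.sum_sub_distrib, ← Finset.sum_sub_distrib, Finset.mul_sum]
  apply Finset.sum_le_sum
  intro j _
  have hpi : 0 ≤ p i := hρ.eigenvalues_nonneg i
  have hqj : 0 ≤ q j := hσ.eigenvalues_nonneg j
  have hMij : 0 ≤ M i j := by positivity
  have hsup : q j = 0 → p i * M i j = 0 := fun h => support_eig hρ hσ hsupp j h i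
  exact pointwise_ineq hpi hqj hMij hc hsup
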